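/- arXiv:1101.0311 — 5 statements merged into one kernel-verified Lean document; each statement's English description precedes it below -/
import Mathlib

section
/- Let x ∈ (0,1) be irrational, and set a₁ = ⌊1/x⌋ and a₂ = ⌊1/G(x)⌋ where G(x) = 1/x - ⌊1/x⌋. Then the denominator ((a₂-a₁)(1+a₁a₂))·x + 1 + a₂(a₁-a₂) is nonzero and S₁₂(x) = ((1 + a₁(a₂-a₁))·x + (a₁-a₂)) / ((a₂-a₁)(1+a₁a₂)·x + 1 + a₂(a₁-a₂)). -/
/-- The Gauss map `G(x) = 1/x - ⌊1/x⌋`. -/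
noncomputable def gaussMap (x : ℝ) : ℝ := 1 / x - ⌊1 / x⌋

/-- The first-two-digit swap map of continued fractions:
`S₁₂(x) = 1/(a₂ + 1/(a₁ + G(G(x))))` with `a₁ = ⌊1/x⌋`, `a₂ = ⌊1/G(x)⌋`. -/
noncomputable def S12 (x : ℝ) : ℝ :=
  1 / ((⌊1 / gaussMap x⌋ : ℝ) + 1 / ((⌊1 / x⌋ : ℝ) + gaussMap (gaussMap x)))

private lemma gaussMap_step (x : ℝ) (hx : Irrational x) (hx01 : x ∈ Set.Ioo (0 : ℝ) 1) :
    Irrational (gaussMap x) ∧ gaussMap x ∈ Set.Ioo (0 : ℝ) 1 ∧ 1 ≤ ⌊1 / x⌋ := by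
  obtain ⟨hx0, hx1⟩ := hx01
  have hinv : Irrational (1 / x) := by
    rw [one_div]; exact hx.inv
  have hirr : Irrational (gaussMap x) := by
    unfold gaussMap
    exact hinv.sub_intCast _
  have hfr : gaussMap x = Int.fract (1 / x) := rfl
  have h0 : 0 ≤ gaussMap x := by rw [hfr]; exact Int.fract_nonneg _
  have h1 : gaussMap x < 1 := by rw [hfr]; exact Int.fract_lt_one _
  have hgt : 1 < 1 / x := (one_lt_div hx0).mpr hx1
  refine ⟨hirr, ⟨?_, h1⟩, ?_⟩
  · rcases h0.lt_or_eq with h | h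
    · exact h
    · exact absurd h.symm (by simpa using hirr.ne_int 0)
  · exact Int.le_floor.mpr (by exact_mod_cast hgt.le)

/-- On the fundamental interval of digits `a₁, a₂`, the swap map `S₁₂` is the Möbius
transformation `x ↦ ((1+a₁(a₂-a₁))x + (a₁-a₂)) / ((a₂-a₁)(1+a₁a₂)x + 1 + a₂(a₁-a₂))`. -/
theorem S12_eq_mobius (x : ℝ) (hx : Irrational x) (hx01 : x ∈ Set.Ioo (0 : ℝ) 1)
    (a₁ a₂ : ℤ) (ha₁ : a₁ = ⌊1 / x⌋) (ha₂ : a₂ = ⌊1 / gaussMap x⌋) :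
    ((a₂ - a₁ : ℝ) * (1 + a₁ * a₂)) * x + 1 + (a₂ : ℝ) * (a₁ - a₂) ≠ 0 ∧
      S12 x = ((1 + (a₁ : ℝ) * (a₂ - a₁)) * x + ((a₁ : ℝ) - a₂)) /
        (((a₂ - a₁ : ℝ) * (1 + a₁ * a₂)) * x + 1 + (a₂ : ℝ) * (a₁ - a₂)) := by
  obtain ⟨hyirr, hy01, ha₁'⟩ := gaussMap_step x hx hx01
  obtain ⟨hzirr, hz01, ha₂'⟩ := gaussMap_step _ hyirr hy01
  rw [← ha₁] at ha₁'
  rw [← ha₂] at ha₂'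
  set y := gaussMap x with hy
  set z := gaussMap y with hz
  obtain ⟨hx0, hx1⟩ := hx01
  obtain ⟨hy0, hy1⟩ := hy01
  obtain ⟨hz0, hz1⟩ := hz01
  have ha₁R : (1 : ℝ) ≤ (a₁ : ℝ) := by exact_mod_cast ha₁'
  have ha₂R : (1 : ℝ) ≤ (a₂ : ℝ) := by exact_mod_cast ha₂'
  have hxne : x ≠ 0 := hx0.ne'
  have hyne : y ≠ 0 := hy0.ne'
  -- basic equations
  have e1 : x * ((a₁ : ℝ) + y) = 1 := by
    have : y = 1 / x - (a₁ : ℝ) := by rw [hy]; unfold gaussMap; rw [ha₁]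
    field_simp [this]; rw [this, show (a₁ : ℝ) + (1 / x - a₁) = 1 / x by ring, mul_one_div_cancel hxne]
  have e2 : y * ((a₂ : ℝ) + z) = 1 := by
    have : z = 1 / y - (a₂ : ℝ) := by rw [hz]; unfold gaussMap; rw [ha₂]
    field_simp [this]; rw [this, show (a₂ : ℝ) + (1 / y - a₂) = 1 / y by ring, mul_one_div_cancel hyne]
  -- key: x * Q = a₂ + z where Q = 1 + a₁a₂ + a₁z
  have key : x * (1 + (a₁ : ℝ) * a₂ + (a₁ : ℝ) * z) = (a₂ : ℝ) + z := by
    linear_combination ((a₂ : ℝ) + z) * e1 - x * e2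
  have hQ : (0 : ℝ) < 1 + (a₁ : ℝ) * a₂ + (a₁ : ℝ) * z := by nlinarith
  have hR : (0 : ℝ) < 1 + (a₁ : ℝ) * a₂ + (a₂ : ℝ) * z := by nlinarith
  set D : ℝ := ((a₂ - a₁ : ℝ) * (1 + a₁ * a₂)) * x + 1 + (a₂ : ℝ) * (a₁ - a₂) with hD
  have hDQ : D * (1 + (a₁ : ℝ) * a₂ + (a₁ : ℝ) * z) = 1 + (a₁ : ℝ) * a₂ + (a₂ : ℝ) * z := by
    rw [hD]; linear_combination ((a₂ : ℝ) - a₁) * (1 + (a₁ : ℝ) * a₂) * key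
  have hDne : D ≠ 0 := by
    intro h
    rw [h, zero_mul] at hDQ
    exact absurd hDQ.symm hR.ne'
  refine ⟨hDne, ?_⟩
  -- S12 x = (a₁ + z) / (1 + a₁a₂ + a₂z)
  have ha1z : (0 : ℝ) < (a₁ : ℝ) + z := by linarith
  have hS : S12 x = ((a₁ : ℝ) + z) / (1 + (a₁ : ℝ) * a₂ + (a₂ : ℝ) * z) := by
    unfold S12
    rw [← hy, ← ha₁, ← ha₂, ← hz]
    rw [div_eq_div_iff (by positivity) hR.ne']
    field_simp
    ring
  rw [hS, div_eq_div_iff hR.ne' hDne]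
  linear_combination -key
end

section
/- Let x ∈ (0,1) be irrational and let a₁, a₂ be positive integers. Then ⌊1/x⌋ = a₁ and ⌊1/G(x)⌋ = a₂ hold if and only if a₂/(1 + a₁a₂) < x < (1+a₂)/(1 + a₁ + a₁a₂), where G(x) = 1/x - ⌊1/x⌋. -/
/-- For irrational `x ∈ (0,1)` and positive integers `a₁, a₂`: the first two continued
fraction digits of `x` are `a₁, a₂` iff `x` lies in the open interval
`(a₂/(1+a₁a₂), (1+a₂)/(1+a₁+a₁a₂))`. -/
theorem digits_iff_mem_interval (x : ℝ) (hx : Irrational x) (hx01 : x ∈ Set.Ioo (0 : ℝ) 1)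
    (a₁ a₂ : ℤ) (h₁ : 0 < a₁) (h₂ : 0 < a₂) :
    (⌊1 / x⌋ = a₁ ∧ ⌊1 / gaussMap x⌋ = a₂) ↔
      ((a₂ : ℝ) / (1 + a₁ * a₂) < x ∧ x < (1 + (a₂ : ℝ)) / (1 + a₁ + a₁ * a₂)) := by
  obtain ⟨hx0, hx1⟩ := hx01
  have ha1 : (1:ℝ) ≤ (a₁:ℝ) := by exact_mod_cast h₁
  have ha2 : (1:ℝ) ≤ (a₂:ℝ) := by exact_mod_cast h₂
  have hd1 : (0:ℝ) < 1 + a₁ * a₂ := by nlinarith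
  have hd2 : (0:ℝ) < 1 + a₁ + a₁ * a₂ := by nlinarith
  have hxne : x ≠ 0 := ne_of_gt hx0
  have hu : (0:ℝ) < 1 / x := by positivity
  have hux : (1 / x) * x = 1 := by field_simp
  have hxirr : Irrational (1 / x) := by
    simpa [one_div] using hx.inv
  constructor
  · rintro ⟨h1, h2⟩
    have hf := (Int.floor_eq_iff).mp h1
    have hlt : (a₁:ℝ) < 1 / x := lt_of_le_of_ne hf.1 (Ne.symm (hxirr.ne_int a₁))
    have hg : (0:ℝ) < 1 / x - a₁ := by linarith
    have hG : gaussMap x = 1 / x - a₁ := by rw [gaussMap, h1]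
    have hGirr : Irrational (gaussMap x) := by rw [hG]; exact hxirr.sub_intCast a₁
    have hGinv : Irrational (1 / gaussMap x) := by simpa [one_div] using hGirr.inv
    have hf2 := (Int.floor_eq_iff).mp h2
    have h2lt : (a₂:ℝ) < 1 / gaussMap x := lt_of_le_of_ne hf2.1 (Ne.symm (hGinv.ne_int a₂))
    have h2lt' : 1 / gaussMap x < (a₂:ℝ) + 1 := by exact_mod_cast hf2.2
    rw [hG] at h2lt h2lt'
    have k1 : (a₂:ℝ) * (1 / x - a₁) < 1 := by
      have := (lt_div_iff₀ hg).mp h2lt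
      linarith
    have k2 : (1:ℝ) < ((a₂:ℝ) + 1) * (1 / x - a₁) := by
      have := (div_lt_iff₀ hg).mp h2lt'
      linarith
    constructor
    · rw [div_lt_iff₀ hd1]
      nlinarith [mul_lt_mul_of_pos_right k1 hx0, hux]
    · rw [lt_div_iff₀ hd2]
      nlinarith [mul_lt_mul_of_pos_right k2 hx0, hux]
  · rintro ⟨hL, hR⟩
    have hL' : (a₂:ℝ) < x * (1 + a₁ * a₂) := (div_lt_iff₀ hd1).mp hL
    have hR' : x * (1 + a₁ + a₁ * a₂) < 1 + a₂ := (lt_div_iff₀ hd2).mp hR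
    have h1x : (a₁:ℝ) * x < 1 := by nlinarith
    have h1x' : (1:ℝ) < ((a₁:ℝ) + 1) * x := by
      nlinarith [mul_lt_mul_of_pos_left hL' (by linarith : (0:ℝ) < (a₁:ℝ) + 1)]
    have hlt : (a₁:ℝ) < 1 / x := by
      rw [lt_div_iff₀ hx0]; linarith
    have hlt' : 1 / x < (a₁:ℝ) + 1 := by
      rw [div_lt_iff₀ hx0]; linarith
    have h1 : ⌊1 / x⌋ = a₁ := by
      rw [Int.floor_eq_iff]
      exact ⟨le_of_lt hlt, by push_cast; linarith⟩
    have hg : (0:ℝ) < 1 / x - a₁ := by linarith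
    have hG : gaussMap x = 1 / x - a₁ := by rw [gaussMap, h1]
    refine ⟨h1, ?_⟩
    have k1 : (a₂:ℝ) * (1 / x - a₁) < 1 := by
      nlinarith [mul_lt_mul_of_pos_right hL' hu, hux]
    have k2 : (1:ℝ) < ((a₂:ℝ) + 1) * (1 / x - a₁) := by
      nlinarith [mul_lt_mul_of_pos_right hR' hu, hux]
    rw [Int.floor_eq_iff, hG]
    constructor
    · exact le_of_lt ((lt_div_iff₀ hg).mpr (by linarith))
    · push_cast
      rw [div_lt_iff₀ hg]
      linarith
end

section
/- The map S₁₂ is an involution on the irrationals of (0,1): for every irrational x ∈ (0,1), S₁₂(S₁₂(x)) = x. In particular, S₁₂ maps the irrationals of the unit interval bijectively onto themselves. -/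
/-- Basic facts about the Gauss map on irrationals of `(0,1)`. -/
lemma gauss_step {x : ℝ} (hx : Irrational x) (h0 : 0 < x) (h1 : x < 1) :
    Irrational (gaussMap x) ∧ 0 < gaussMap x ∧ gaussMap x < 1 ∧ (1 : ℤ) ≤ ⌊1 / x⌋ := by
  have hinv : Irrational (1 / x) := by
    rw [one_div]; exact hx.inv
  have hlt : 1 < 1 / x := one_lt_one_div h0 h1
  have hfloor : (1 : ℤ) ≤ ⌊1 / x⌋ := Int.le_floor.mpr (by exact_mod_cast hlt.le)
  have hirr : Irrational (gaussMap x) := by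
    unfold gaussMap; exact hinv.sub_intCast _
  have hge : 0 ≤ gaussMap x := by
    have h := Int.fract_nonneg (1 / x)
    rwa [Int.fract] at h
  refine ⟨hirr, lt_of_le_of_ne hge (Ne.symm hirr.ne_zero), ?_, hfloor⟩
  have h := Int.fract_lt_one (1 / x)
  rwa [Int.fract] at h

/-- Decomposition: for `y = 1/(b + 1/(a + r))` with `a,b ≥ 1` integers and `r`
irrational in `(0,1)`, recover the data. -/
lemma decomp {a b : ℤ} (ha : 1 ≤ a) (hb : 1 ≤ b) {r : ℝ} (hr : Irrational r)
    (hr0 : 0 < r) (hr1 : r < 1) :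
    let y := 1 / ((b : ℝ) + 1 / ((a : ℝ) + r))
    Irrational y ∧ 0 < y ∧ y < 1 ∧ ⌊1 / y⌋ = b ∧ gaussMap y = 1 / ((a : ℝ) + r) ∧
      ⌊1 / gaussMap y⌋ = a ∧ gaussMap (gaussMap y) = r := by
  intro y
  have ha' : (1 : ℝ) ≤ (a : ℝ) := by exact_mod_cast ha
  have hb' : (1 : ℝ) ≤ (b : ℝ) := by exact_mod_cast hb
  have hs1 : 1 < (a : ℝ) + r := by linarith
  have hs0 : 0 < (a : ℝ) + r := by linarith
  have hinv0 : 0 < 1 / ((a : ℝ) + r) := by positivity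
  have hinv1 : 1 / ((a : ℝ) + r) < 1 := by
    rw [div_lt_one hs0]; linarith
  have hd1 : 1 < (b : ℝ) + 1 / ((a : ℝ) + r) := by linarith
  have hd0 : 0 < (b : ℝ) + 1 / ((a : ℝ) + r) := by linarith
  have hy0 : 0 < y := by positivity
  have hy1 : y < 1 := by
    show 1 / _ < 1
    rw [div_lt_one hd0]; exact hd1
  have hsirr : Irrational ((a : ℝ) + r) := hr.intCast_add a
  have hinvirr : Irrational (1 / ((a : ℝ) + r)) := by rw [one_div]; exact hsirr.inv
  have hdirr : Irrational ((b : ℝ) + 1 / ((a : ℝ) + r)) := hinvirr.intCast_add b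
  have hyirr : Irrational y := by
    show Irrational (1 / _)
    rw [one_div]; exact hdirr.inv
  have h1y : 1 / y = (b : ℝ) + 1 / ((a : ℝ) + r) := by
    show 1 / (1 / _) = _
    rw [one_div_one_div]
  have hfy : ⌊1 / y⌋ = b := by
    rw [h1y, Int.floor_intCast_add]
    have : ⌊1 / ((a : ℝ) + r)⌋ = 0 := Int.floor_eq_zero_iff.mpr ⟨hinv0.le, hinv1⟩
    omega
  have hgy : gaussMap y = 1 / ((a : ℝ) + r) := by
    rw [show gaussMap y = 1 / y - (⌊1 / y⌋ : ℝ) from rfl, hfy, h1y]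
    ring
  have h1gy : 1 / gaussMap y = (a : ℝ) + r := by
    rw [hgy, one_div_one_div]
  have hfgy : ⌊1 / gaussMap y⌋ = a := by
    rw [h1gy, Int.floor_intCast_add]
    have : ⌊r⌋ = 0 := Int.floor_eq_zero_iff.mpr ⟨hr0.le, hr1⟩
    omega
  have hggy : gaussMap (gaussMap y) = r := by
    rw [show gaussMap (gaussMap y) = 1 / gaussMap y - (⌊1 / gaussMap y⌋ : ℝ) from rfl,
      hfgy, h1gy]
    ring
  exact ⟨hyirr, hy0, hy1, hfy, hgy, hfgy, hggy⟩

lemma S12_mem {x : ℝ} (hx : Irrational x) (h0 : 0 < x) (h1 : x < 1) :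
    Irrational (S12 x) ∧ 0 < S12 x ∧ S12 x < 1 ∧ S12 (S12 x) = x := by
  obtain ⟨hgirr, hg0, hg1, ha⟩ := gauss_step hx h0 h1
  obtain ⟨hggirr, hgg0, hgg1, hb⟩ := gauss_step hgirr hg0 hg1
  obtain ⟨hyirr, hy0, hy1, hfy, hgy, hfgy, hggy⟩ := decomp ha hb hggirr hgg0 hgg1
  have hS : S12 x = 1 / ((⌊1 / gaussMap x⌋ : ℝ) +
      1 / ((⌊1 / x⌋ : ℝ) + gaussMap (gaussMap x))) := rfl
  refine ⟨hS ▸ hyirr, hS ▸ hy0, hS ▸ hy1, ?_⟩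
  have hSS : S12 (S12 x) = 1 / ((⌊1 / x⌋ : ℝ) +
      1 / ((⌊1 / gaussMap x⌋ : ℝ) + gaussMap (gaussMap x))) := by
    simp only [S12]
    rw [hfy, hfgy, hggy]
  rw [hSS]
  have h1g : 1 / gaussMap x = (⌊1 / gaussMap x⌋ : ℝ) + gaussMap (gaussMap x) := by
    have : gaussMap (gaussMap x) = 1 / gaussMap x - (⌊1 / gaussMap x⌋ : ℝ) := rfl
    linarith
  have h1x : 1 / x = (⌊1 / x⌋ : ℝ) + gaussMap x := by
    have : gaussMap x = 1 / x - (⌊1 / x⌋ : ℝ) := rfl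
    linarith
  rw [← h1g, one_div_one_div, ← h1x, one_div_one_div]

/-- `S₁₂` is an involution on the irrationals of `(0,1)`; in particular it maps this
set bijectively onto itself. -/
theorem S12_involutive :
    (∀ x : ℝ, Irrational x → x ∈ Set.Ioo (0 : ℝ) 1 → S12 (S12 x) = x) ∧
      Set.BijOn S12 ({x : ℝ | Irrational x} ∩ Set.Ioo (0 : ℝ) 1)
        ({x : ℝ | Irrational x} ∩ Set.Ioo (0 : ℝ) 1) := by
  have key : ∀ x : ℝ, Irrational x → x ∈ Set.Ioo (0 : ℝ) 1 →
      Irrational (S12 x) ∧ 0 < S12 x ∧ S12 x < 1 ∧ S12 (S12 x) = x := by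
    intro x hx hm
    exact S12_mem hx hm.1 hm.2
  constructor
  · intro x hx hmem
    exact (key x hx hmem).2.2.2
  · have hmaps : Set.MapsTo S12 ({x : ℝ | Irrational x} ∩ Set.Ioo (0 : ℝ) 1)
        ({x : ℝ | Irrational x} ∩ Set.Ioo (0 : ℝ) 1) := by
      rintro x ⟨hx, hmem⟩
      obtain ⟨hi, h0, h1, _⟩ := key x hx hmem
      exact ⟨hi, h0, h1⟩
    refine ⟨hmaps, ?_, ?_⟩
    · rintro x ⟨hx, hxm⟩ y ⟨hy, hym⟩ hxy
      calc x = S12 (S12 x) := ((key x hx hxm).2.2.2).symm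
        _ = S12 (S12 y) := by rw [hxy]
        _ = y := (key y hy hym).2.2.2
    · rintro y ⟨hy, hym⟩
      exact ⟨S12 y, hmaps ⟨hy, hym⟩, (key y hy hym).2.2.2⟩
end

section
/- The restriction of S₁₂ to the set of irrational numbers in (0,1), with the subspace topology, is a continuous function; hence S₁₂ (extended in any way to all of (0,1)) is continuous except possibly at the countably many rational points. -/
lemma floorCast_continuousAt {x : ℝ} (h : Irrational x) :
    ContinuousAt (fun y : ℝ => (⌊y⌋ : ℝ)) x := by
  have h' : x ≠ (⌊x⌋ : ℝ) := h.ne_int _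
  have hf : ContinuousAt Int.fract x := continuousAt_fract h'
  have : ContinuousAt (fun y : ℝ => y - Int.fract y) x := continuousAt_id.sub hf
  have heq : (fun y : ℝ => (⌊y⌋ : ℝ)) = fun y : ℝ => y - Int.fract y := by
    funext y; rw [Int.self_sub_fract]
  rw [heq]; exact this

lemma irrational_gauss {x : ℝ} (h : Irrational x) : Irrational (gaussMap x) := by
  have h1 : Irrational (1 / x) := by
    rw [one_div]; exact h.inv
  exact h1.sub_intCast _

lemma gauss_mem {x : ℝ} (h : Irrational x) (hx : x ∈ Set.Ioo (0:ℝ) 1) :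
    gaussMap x ∈ Set.Ioo (0:ℝ) 1 := by
  have hfr : gaussMap x = Int.fract (1 / x) := rfl
  have h0 : (0:ℝ) ≤ Int.fract (1 / x) := Int.fract_nonneg _
  have h1 : Int.fract (1 / x) < 1 := Int.fract_lt_one _
  have hne : Int.fract (1 / x) ≠ 0 := (irrational_gauss h).ne_zero
  exact ⟨lt_of_le_of_ne h0 (Ne.symm hne), by simpa [hfr] using h1⟩

lemma floor_ge_one {x : ℝ} (hx : x ∈ Set.Ioo (0:ℝ) 1) : (1:ℝ) ≤ (⌊1 / x⌋ : ℝ) := by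
  have : (1:ℝ) < 1 / x := one_lt_one_div hx.1 hx.2
  exact_mod_cast Int.le_floor.2 (by exact_mod_cast this.le)

lemma gauss_continuousAt {x : ℝ} (h : Irrational x) (hx : x ≠ 0) :
    ContinuousAt gaussMap x := by
  have hinv : ContinuousAt (fun y : ℝ => 1 / y) x :=
    continuousAt_const.div continuousAt_id hx
  have h1 : Irrational (1 / x) := by rw [one_div]; exact h.inv
  have hfl : ContinuousAt (fun y : ℝ => (⌊1 / y⌋ : ℝ)) x :=
    (floorCast_continuousAt h1).comp hinv
  exact hinv.sub hfl

/-- The restriction of `S₁₂` to the irrationals of `(0,1)` (with the subspace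
topology) is continuous. -/
theorem S12_continuousOn_irrationals :
    ContinuousOn S12 ({x : ℝ | Irrational x} ∩ Set.Ioo (0 : ℝ) 1) := by
  intro x hx
  obtain ⟨hirr, hmem⟩ := hx
  apply ContinuousAt.continuousWithinAt
  have hx0 : x ≠ 0 := ne_of_gt hmem.1
  have hG : ContinuousAt gaussMap x := gauss_continuousAt hirr hx0
  have hGirr : Irrational (gaussMap x) := irrational_gauss hirr
  have hGmem : gaussMap x ∈ Set.Ioo (0:ℝ) 1 := gauss_mem hirr hmem
  have hGG : ContinuousAt (fun y => gaussMap (gaussMap y)) x :=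
    (gauss_continuousAt hGirr (ne_of_gt hGmem.1)).comp hG
  have hGGirr : Irrational (gaussMap (gaussMap x)) := irrational_gauss hGirr
  have hGGmem : gaussMap (gaussMap x) ∈ Set.Ioo (0:ℝ) 1 := gauss_mem hGirr hGmem
  -- continuity of floors
  have hinv : ContinuousAt (fun y : ℝ => 1 / y) x :=
    continuousAt_const.div continuousAt_id hx0
  have h1 : Irrational (1 / x) := by rw [one_div]; exact hirr.inv
  have hfl1 : ContinuousAt (fun y : ℝ => (⌊1 / y⌋ : ℝ)) x :=
    (floorCast_continuousAt h1).comp hinv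
  have hinvG : ContinuousAt (fun y : ℝ => 1 / gaussMap y) x :=
    continuousAt_const.div hG (ne_of_gt hGmem.1)
  have h1G : Irrational (1 / gaussMap x) := by rw [one_div]; exact hGirr.inv
  have hfl2 : ContinuousAt (fun y : ℝ => (⌊1 / gaussMap y⌋ : ℝ)) x := by
    have : ContinuousAt (fun y : ℝ => (⌊y⌋ : ℝ)) (1 / gaussMap x) :=
      floorCast_continuousAt h1G
    exact ContinuousAt.comp (x := x) (f := fun y : ℝ => 1 / gaussMap y) this hinvG
  -- inner denominator positive
  have hfloor1 : (1:ℝ) ≤ (⌊1 / x⌋ : ℝ) := floor_ge_one hmem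
  have hfloor2 : (1:ℝ) ≤ (⌊1 / gaussMap x⌋ : ℝ) := floor_ge_one hGmem
  have hinner_pos : 0 < (⌊1 / x⌋ : ℝ) + gaussMap (gaussMap x) := by
    have := hGGmem.1; linarith
  have houter_pos :
      0 < (⌊1 / gaussMap x⌋ : ℝ) + 1 / ((⌊1 / x⌋ : ℝ) + gaussMap (gaussMap x)) := by
    have : 0 < 1 / ((⌊1 / x⌋ : ℝ) + gaussMap (gaussMap x)) := by positivity
    linarith
  have hinner : ContinuousAt
      (fun y => (⌊1 / y⌋ : ℝ) + gaussMap (gaussMap y)) x := hfl1.add hGG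
  have hfrac : ContinuousAt
      (fun y => 1 / ((⌊1 / y⌋ : ℝ) + gaussMap (gaussMap y))) x :=
    continuousAt_const.div hinner (ne_of_gt hinner_pos)
  have hden : ContinuousAt
      (fun y => (⌊1 / gaussMap y⌋ : ℝ) + 1 / ((⌊1 / y⌋ : ℝ) + gaussMap (gaussMap y))) x :=
    hfl2.add hfrac
  exact continuousAt_const.div hden (ne_of_gt houter_pos)
end

section
/- Fix a complex number s with Re(s) > 0, and extend S₁₂ to all of (0,1) by setting S₁₂(x) = 0 for rational x. Then the family, indexed by pairs of positive integers (a₁,a₂), of interval integrals ∫ from a₂/(1+a₁a₂) to (1+a₂)/(1+a₁+a₁a₂) of ((1 + a₁(a₂-a₁))·x + (a₁-a₂)) / ((a₂-a₁)(1+a₁a₂)·x + 1 + a₂(a₁-a₂)) · x^{s-1} dx has sum (HasSum, i.e. unconditionally convergent sum) equal to ∫₀¹ S₁₂(x)·x^{s-1} dx. -/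
open MeasureTheory intervalIntegral Classical

/-- The first-two-digit swap map of continued fractions, extended by `0` at
rational points: for irrational `x`,
`S₁₂(x) = 1/(a₂ + 1/(a₁ + G(G(x))))` with `a₁ = ⌊1/x⌋`, `a₂ = ⌊1/G(x)⌋`. -/
noncomputable def S12ext (x : ℝ) : ℝ :=
  if Irrational x then
    1 / ((⌊1 / gaussMap x⌋ : ℝ) + 1 / ((⌊1 / x⌋ : ℝ) + gaussMap (gaussMap x)))
  else 0

lemma interval_facts {a b : ℤ} (ha : 0 < a) (hb : 0 < b) {x : ℝ}
    (hx : x ∈ Set.Ioo ((b:ℝ) / (1 + a * b)) ((1 + (b:ℝ)) / (1 + a + a * b))) :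
    0 < x ∧ (a:ℝ) + 1/((b:ℝ)+1) < 1/x ∧ 1/x < (a:ℝ) + 1/(b:ℝ) := by
  have hA : (1:ℝ) ≤ (a:ℝ) := by exact_mod_cast ha
  have hB : (1:ℝ) ≤ (b:ℝ) := by exact_mod_cast hb
  have hB0 : (0:ℝ) < b := by linarith
  have hB1 : (0:ℝ) < (b:ℝ) + 1 := by linarith
  have hd1 : (0:ℝ) < 1 + a * b := by nlinarith
  have hd2 : (0:ℝ) < 1 + a + a * b := by nlinarith
  have hx0 : 0 < x := lt_trans (by positivity) hx.1
  have h1 : (b:ℝ) < x * (1 + a * b) := (div_lt_iff₀ hd1).mp hx.1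
  have h2 : x * (1 + a + a * b) < 1 + b := (lt_div_iff₀ hd2).mp hx.2
  refine ⟨hx0, ?_, ?_⟩
  · rw [lt_div_iff₀ hx0]
    have e : ((a:ℝ) + 1/((b:ℝ)+1)) * ((b:ℝ)+1) = 1 + a + a*b := by
      field_simp; ring
    nlinarith [mul_pos hx0 hB1]
  · rw [div_lt_iff₀ hx0]
    have e : ((a:ℝ) + 1/(b:ℝ)) * (b:ℝ) = 1 + a*b := by
      field_simp; ring
    nlinarith [mul_pos hx0 hB0]

lemma floor_facts {a b : ℤ} (ha : 0 < a) (hb : 0 < b) {x : ℝ}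
    (hx : x ∈ Set.Ioo ((b:ℝ) / (1 + a * b)) ((1 + (b:ℝ)) / (1 + a + a * b))) :
    ⌊1/x⌋ = a ∧ gaussMap x = 1/x - a ∧ ⌊1/(1/x - (a:ℝ))⌋ = b ∧
      1/((b:ℝ)+1) < 1/x - a ∧ 1/x - a < 1/(b:ℝ) ∧
      (b:ℝ) < 1/(1/x - a) ∧ 1/(1/x - a) < (b:ℝ) + 1 := by
  obtain ⟨hx0, hl, hu⟩ := interval_facts ha hb hx
  have hA : (1:ℝ) ≤ (a:ℝ) := by exact_mod_cast ha
  have hB : (1:ℝ) ≤ (b:ℝ) := by exact_mod_cast hb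
  have hB0 : (0:ℝ) < b := by linarith
  have hB1 : (0:ℝ) < (b:ℝ) + 1 := by linarith
  have hb1pos : (0:ℝ) < 1/((b:ℝ)+1) := by positivity
  have hble : 1/(b:ℝ) ≤ 1 := by
    rw [div_le_one hB0]; exact hB
  have hf1 : ⌊1/x⌋ = a := by
    rw [Int.floor_eq_iff]
    constructor
    · linarith
    · push_cast; linarith
  have hg : gaussMap x = 1/x - a := by rw [gaussMap, hf1]
  set t : ℝ := 1/x - a with htdef
  have ht1 : 1/((b:ℝ)+1) < t := by simp only [htdef]; linarith
  have ht2 : t < 1/(b:ℝ) := by simp only [htdef]; linarith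
  have ht0 : 0 < t := lt_trans hb1pos ht1
  have hinv1 : (b:ℝ) < 1/t := by
    rw [lt_div_iff₀ ht0]
    calc (b:ℝ) * t < (b:ℝ) * (1/(b:ℝ)) := by
          exact mul_lt_mul_of_pos_left ht2 hB0
      _ = 1 := by field_simp
  have hinv2 : 1/t < (b:ℝ) + 1 := by
    rw [div_lt_iff₀ ht0]
    calc (1:ℝ) = ((b:ℝ)+1) * (1/((b:ℝ)+1)) := by field_simp
      _ < ((b:ℝ)+1) * t := mul_lt_mul_of_pos_left ht1 hB1
  have hf2 : ⌊1/t⌋ = b := by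
    rw [Int.floor_eq_iff]
    constructor
    · linarith
    · push_cast; linarith
  exact ⟨hf1, hg, hf2, ht1, ht2, hinv1, hinv2⟩

lemma S12_form {a b : ℤ} (ha : 0 < a) (hb : 0 < b) {x : ℝ} (hirr : Irrational x)
    (hx : x ∈ Set.Ioo ((b:ℝ) / (1 + a * b)) ((1 + (b:ℝ)) / (1 + a + a * b))) :
    S12ext x = 1/((b:ℝ) + 1/((a:ℝ) + (1/(1/x - (a:ℝ)) - (b:ℝ)))) := by
  obtain ⟨hf1, hg, hf2, ht1, ht2, hinv1, hinv2⟩ := floor_facts ha hb hx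
  rw [S12ext, if_pos hirr, hg, hf1]
  simp only [gaussMap]
  rw [hf2]

lemma S12_eq {a b : ℤ} (ha : 0 < a) (hb : 0 < b) {x : ℝ} (hirr : Irrational x)
    (hx : x ∈ Set.Ioo ((b:ℝ) / (1 + a * b)) ((1 + (b:ℝ)) / (1 + a + a * b))) :
    S12ext x = ((1 + (a:ℝ)*((b:ℝ)-(a:ℝ)))*x + ((a:ℝ)-(b:ℝ))) /
      (((b:ℝ)-(a:ℝ))*(1+(a:ℝ)*(b:ℝ))*x + 1 + (b:ℝ)*((a:ℝ)-(b:ℝ))) ∧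
    0 < S12ext x ∧ S12ext x < 1 := by
  obtain ⟨hx0, -, -⟩ := interval_facts ha hb hx
  obtain ⟨hf1, hg, hf2, ht1, ht2, hinv1, hinv2⟩ := floor_facts ha hb hx
  have hform := S12_form ha hb hirr hx
  have hA : (1:ℝ) ≤ (a:ℝ) := by exact_mod_cast ha
  have hB : (1:ℝ) ≤ (b:ℝ) := by exact_mod_cast hb
  set A := (a:ℝ) with hAdef
  set B := (b:ℝ) with hBdef
  set t : ℝ := 1/x - A with htdef
  have ht0 : 0 < t := lt_trans (by positivity) ht1
  have hxt : x = 1/(A+t) := by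
    rw [htdef]
    have : A + (1/x - A) = 1/x := by ring
    rw [this, one_div_one_div]
  clear_value t
  clear htdef hg hf2 ht2 hinv2 hf1 hx
  subst hxt
  have hAt0 : 0 < A + t := by linarith
  have hd1 : 0 < A + (1/t - B) := by linarith
  have hd2 : 0 < B + 1/(A + (1/t - B)) := by positivity
  have hBt : B * t < 1 := by
    calc B * t < (1/t) * t := mul_lt_mul_of_pos_right hinv1 ht0
      _ = 1 := by field_simp
  have hkey : 0 < B + (1+A*B-B^2)*t := by
    nlinarith [mul_lt_mul_of_pos_left hBt (by linarith : (0:ℝ) < B),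
      mul_pos (mul_pos (by linarith : (0:ℝ) < A) (by linarith : (0:ℝ) < B)) ht0]
  have hden : (B-A)*(1+A*B)*(1/(A+t)) + 1 + B*(A-B) = (B + (1+A*B-B^2)*t)/(A+t) := by
    field_simp
    ring
  have hd3 : 0 < (B-A)*(1+A*B)*(1/(A+t)) + 1 + B*(A-B) := by
    rw [hden]; exact div_pos hkey hAt0
  refine ⟨?_, ?_, ?_⟩
  · have hAtpos : 0 < A * t := by positivity
    have h5 : (0:ℝ) < 1 + (A-B)*t := by nlinarith
    have e1 : A + (1/t - B) = (1 + (A-B)*t)/t := by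
      field_simp; ring
    have e2 : B + 1/(A + (1/t - B)) = (B + (1+A*B-B^2)*t)/(1+(A-B)*t) := by
      rw [e1, one_div_div]
      rw [eq_div_iff h5.ne', add_mul, div_mul_cancel₀ _ h5.ne']
      ring
    have e3 : (1 + A*(B-A))*(1/(A+t)) + (A-B) = (1 + (A-B)*t)/(A+t) := by
      field_simp
      ring
    rw [hform, e2, e3, hden, one_div_div, div_div_div_comm,
      div_self hAt0.ne', div_one]
  · rw [hform]; positivity
  · rw [hform]
    have h1 : 0 < 1/(A + (1/t - B)) := by positivity
    have : 1 < B + 1/(A + (1/t - B)) := by linarith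
    calc 1/(B + 1/(A + (1/t - B))) < 1/1 :=
          one_div_lt_one_div_of_lt one_pos this
      _ = 1 := by norm_num

lemma covering {x : ℝ} (hx0 : 0 < x) (hx1 : x < 1) (hirr : Irrational x) :
    0 < ⌊1/x⌋ ∧ 0 < ⌊1/(gaussMap x)⌋ ∧
      x ∈ Set.Ioo ((⌊1/(gaussMap x)⌋:ℝ) / (1 + ⌊1/x⌋ * ⌊1/(gaussMap x)⌋))
        ((1 + (⌊1/(gaussMap x)⌋:ℝ)) / (1 + ⌊1/x⌋ + ⌊1/x⌋ * ⌊1/(gaussMap x)⌋)) := by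
  have h1x_irr : Irrational (1/x) := by rw [one_div]; exact hirr.inv
  have h1x : 1 < 1/x := by rw [lt_div_iff₀ hx0]; linarith
  set a : ℤ := ⌊1/x⌋ with hadef
  have ha : 0 < a := by
    rw [hadef]
    exact Int.le_floor.mpr (by push_cast; linarith)
  have haL : (a:ℝ) < 1/x :=
    lt_of_le_of_ne (Int.floor_le _) (Ne.symm (h1x_irr.ne_int a))
  have haU : 1/x < (a:ℝ) + 1 := Int.lt_floor_add_one _
  have hgdef : gaussMap x = 1/x - (a:ℝ) := rfl
  have hg0 : 0 < gaussMap x := by rw [hgdef]; linarith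
  have hg1 : gaussMap x < 1 := by rw [hgdef]; linarith
  have hg_irr : Irrational (gaussMap x) := by
    rw [hgdef]; exact h1x_irr.sub_intCast a
  have h1g_irr : Irrational (1/(gaussMap x)) := by rw [one_div]; exact hg_irr.inv
  have h1g : 1 < 1/(gaussMap x) := by rw [lt_div_iff₀ hg0]; linarith
  set b : ℤ := ⌊1/(gaussMap x)⌋ with hbdef
  have hb : 0 < b := by
    rw [hbdef]
    exact Int.le_floor.mpr (by push_cast; linarith)
  have hbL : (b:ℝ) < 1/(gaussMap x) :=
    lt_of_le_of_ne (Int.floor_le _) (Ne.symm (h1g_irr.ne_int b))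
  have hbU : 1/(gaussMap x) < (b:ℝ) + 1 := Int.lt_floor_add_one _
  have hA : (1:ℝ) ≤ (a:ℝ) := by exact_mod_cast ha
  have hB : (1:ℝ) ≤ (b:ℝ) := by exact_mod_cast hb
  have hB0 : (0:ℝ) < b := by linarith
  have hB1 : (0:ℝ) < (b:ℝ) + 1 := by linarith
  -- bounds on g
  have hgL : 1/((b:ℝ)+1) < gaussMap x := by
    rw [div_lt_iff₀ hB1]
    calc (1:ℝ) = gaussMap x * (1/gaussMap x) := by field_simp
      _ < gaussMap x * ((b:ℝ)+1) := by
          exact mul_lt_mul_of_pos_left hbU hg0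
  have hgU : gaussMap x < 1/(b:ℝ) := by
    rw [lt_div_iff₀ hB0]
    calc gaussMap x * (b:ℝ) < gaussMap x * (1/gaussMap x) := by
          exact mul_lt_mul_of_pos_left hbL hg0
      _ = 1 := by field_simp
  -- bounds on 1/x
  have h1xL : (a:ℝ) + 1/((b:ℝ)+1) < 1/x := by
    have : 1/x = (a:ℝ) + gaussMap x := by rw [hgdef]; ring
    rw [this]; linarith
  have h1xU : 1/x < (a:ℝ) + 1/(b:ℝ) := by
    have : 1/x = (a:ℝ) + gaussMap x := by rw [hgdef]; ring
    rw [this]; linarith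
  have hd1 : (0:ℝ) < 1 + a * b := by nlinarith
  have hd2 : (0:ℝ) < 1 + a + a * b := by nlinarith
  refine ⟨ha, hb, ?_, ?_⟩
  · rw [div_lt_iff₀ hd1]
    have e : ((a:ℝ) + 1/(b:ℝ)) * (b:ℝ) = 1 + a*b := by field_simp; ring
    have h1 : 1/x * x = 1 := by field_simp
    nlinarith [mul_lt_mul_of_pos_right h1xU hx0, mul_pos hx0 hB0]
  · rw [lt_div_iff₀ hd2]
    have e : ((a:ℝ) + 1/((b:ℝ)+1)) * ((b:ℝ)+1) = 1 + a + a*b := by field_simp; ring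
    have h1 : 1/x * x = 1 := by field_simp
    nlinarith [mul_lt_mul_of_pos_right h1xL hx0, mul_pos hx0 hB1]

lemma measurable_gaussMap : Measurable gaussMap := by
  have h1 : Measurable fun x : ℝ => 1/x := measurable_const.div measurable_id
  exact h1.sub (measurable_from_top.comp h1.floor)

lemma measurable_S12ext : Measurable S12ext := by
  have h1 : Measurable fun x : ℝ => 1/x := measurable_const.div measurable_id
  have hg := measurable_gaussMap
  have hfc : ∀ {f : ℝ → ℝ}, Measurable f → Measurable fun x => ((⌊f x⌋ : ℤ) : ℝ) :=
    fun hf => measurable_from_top.comp hf.floor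
  have hset : MeasurableSet {x : ℝ | Irrational x} := by
    have : {x : ℝ | Irrational x} = (Set.range ((↑) : ℚ → ℝ))ᶜ := rfl
    rw [this]; exact (Set.countable_range _).measurableSet.compl
  unfold S12ext
  refine Measurable.ite hset ?_ measurable_const
  exact measurable_const.div
    ((hfc (measurable_const.div hg)).add
      (measurable_const.div ((hfc h1).add (hg.comp hg))))

lemma ae_irrational : ∀ᵐ x : ℝ, Irrational x := by
  rw [MeasureTheory.ae_iff]
  have : {x : ℝ | ¬ Irrational x} = Set.range ((↑) : ℚ → ℝ) := by
    ext x; simp [Irrational]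
  rw [this]
  exact (Set.countable_range _).measure_zero _

open MeasureTheory intervalIntegral


/-- For `Re s > 0`, the family of Möbius integrals over the fundamental intervals,
indexed by pairs of positive integers `(a₁, a₂)`, has (unconditional) sum equal to
`∫₀¹ S₁₂(x)·x^{s-1} dx`. -/
theorem hasSum_mobius_integrals (s : ℂ) (hs : 0 < s.re) :
    HasSum
      (fun p : {p : ℤ × ℤ // 0 < p.1 ∧ 0 < p.2} =>
        ∫ x in ((p.1.2 : ℝ) / (1 + p.1.1 * p.1.2))..
            ((1 + (p.1.2 : ℝ)) / (1 + p.1.1 + p.1.1 * p.1.2)),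
          (((1 + (p.1.1 : ℝ) * (p.1.2 - p.1.1)) * x + ((p.1.1 : ℝ) - p.1.2)) /
              ((((p.1.2 : ℝ) - p.1.1) * (1 + (p.1.1 : ℝ) * p.1.2)) * x +
                1 + (p.1.2 : ℝ) * ((p.1.1 : ℝ) - p.1.2)) : ℂ) *
            (x : ℂ) ^ (s - 1))
      (∫ x in (0:ℝ)..1, (S12ext x : ℂ) * (x : ℂ) ^ (s - 1)) := by
  classical
  set f : ℝ → ℂ := fun x => (S12ext x : ℂ) * (x : ℂ) ^ (s - 1) with hfdef
  set T : {p : ℤ × ℤ // 0 < p.1 ∧ 0 < p.2} → Set ℝ := fun p =>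
    Set.Ioo ((p.1.2 : ℝ) / (1 + p.1.1 * p.1.2))
      ((1 + (p.1.2 : ℝ)) / (1 + p.1.1 + p.1.1 * p.1.2)) with hTdef
  have hmeas : ∀ p, MeasurableSet (T p) := fun p => measurableSet_Ioo
  have hsub : ∀ p, T p ⊆ Set.Ioo (0:ℝ) 1 := by
    intro p x hx
    obtain ⟨hx0, hl, hu⟩ := interval_facts p.2.1 p.2.2 hx
    have hA : (1:ℝ) ≤ (p.1.1 : ℝ) := by exact_mod_cast p.2.1
    have hB : (1:ℝ) ≤ (p.1.2 : ℝ) := by exact_mod_cast p.2.2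
    have hb1 : (0:ℝ) < 1/((p.1.2:ℝ)+1) := by positivity
    have h1x : 1 < 1/x := by linarith
    rw [lt_div_iff₀ hx0] at h1x
    exact ⟨hx0, by linarith⟩
  have hdisj : Pairwise (Function.onFun Disjoint T) := by
    intro p q hpq
    rw [Function.onFun, Set.disjoint_left]
    intro x hxp hxq
    apply hpq
    obtain ⟨hf1p, -, hf2p, -⟩ := floor_facts p.2.1 p.2.2 hxp
    obtain ⟨hf1q, -, hf2q, -⟩ := floor_facts q.2.1 q.2.2 hxq
    have h1 : p.1.1 = q.1.1 := hf1p.symm.trans hf1q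
    have h2 : p.1.2 = q.1.2 := by
      rw [← hf2p, ← hf2q, h1]
    exact Subtype.ext (Prod.ext h1 h2)
  -- integrability
  have hcpow : IntegrableOn (fun x : ℝ => (x:ℂ) ^ (s-1)) (Set.Ioc 0 1) volume := by
    have h := (intervalIntegral.intervalIntegrable_cpow' (a := 0) (b := 1) (r := s - 1)
      (by simp only [Complex.sub_re, Complex.one_re]; linarith)).1
    simpa using h
  have hcpow' : IntegrableOn (fun x : ℝ => (x:ℂ) ^ (s-1)) (Set.Ioo 0 1) volume :=
    hcpow.mono_set Set.Ioo_subset_Ioc_self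
  have hfaesm : AEStronglyMeasurable f (volume.restrict (Set.Ioo (0:ℝ) 1)) := by
    exact ((Complex.measurable_ofReal.comp measurable_S12ext).aestronglyMeasurable).mul
      hcpow'.aestronglyMeasurable
  have hbound : ∀ x ∈ Set.Ioo (0:ℝ) 1, ‖f x‖ ≤ ‖(x:ℂ) ^ (s-1)‖ := by
    intro x hx
    have hS : |S12ext x| ≤ 1 := by
      by_cases hirr : Irrational x
      · obtain ⟨ha, hb, hmem⟩ := covering hx.1 hx.2 hirr
        obtain ⟨-, h0, h1⟩ := S12_eq ha hb hirr hmem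
        rw [abs_of_pos h0]; linarith
      · rw [S12ext, if_neg hirr]; simp
    calc ‖f x‖ = |S12ext x| * ‖(x:ℂ) ^ (s-1)‖ := by
          rw [hfdef]; simp [norm_mul, Complex.norm_real, Real.norm_eq_abs]
      _ ≤ 1 * ‖(x:ℂ) ^ (s-1)‖ := by
          exact mul_le_mul_of_nonneg_right hS (norm_nonneg _)
      _ = ‖(x:ℂ) ^ (s-1)‖ := one_mul _
  have hint : IntegrableOn f (Set.Ioo (0:ℝ) 1) volume := by
    refine Integrable.mono' hcpow'.norm hfaesm ?_
    filter_upwards [ae_restrict_mem measurableSet_Ioo] with x hx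
    exact hbound x hx
  have hintU : IntegrableOn f (⋃ p, T p) volume :=
    hint.mono_set (Set.iUnion_subset hsub)
  have hsum := MeasureTheory.hasSum_integral_iUnion hmeas hdisj hintU
  -- union is a.e. (0,1)
  have hUae : (⋃ p, T p) =ᵐ[volume] Set.Ioo (0:ℝ) 1 := by
    rw [Filter.eventuallyEq_set]
    filter_upwards [ae_irrational] with x hirr
    constructor
    · intro hx
      obtain ⟨p, hp⟩ := Set.mem_iUnion.mp hx
      exact hsub p hp
    · intro hx
      obtain ⟨ha, hb, hmem⟩ := covering hx.1 hx.2 hirr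
      exact Set.mem_iUnion.mpr ⟨⟨(⌊1/x⌋, ⌊1/(gaussMap x)⌋), ha, hb⟩, hmem⟩
  have hval : (∫ x in ⋃ p, T p, f x) = ∫ x in (0:ℝ)..1, f x := by
    rw [MeasureTheory.setIntegral_congr_set hUae,
      intervalIntegral.integral_of_le (by norm_num : (0:ℝ) ≤ 1),
      MeasureTheory.integral_Ioc_eq_integral_Ioo]
  rw [hval] at hsum
  -- identify each term
  have hterm : ∀ p : {p : ℤ × ℤ // 0 < p.1 ∧ 0 < p.2},
      (∫ x in T p, f x) =
      ∫ x in ((p.1.2 : ℝ) / (1 + p.1.1 * p.1.2))..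
          ((1 + (p.1.2 : ℝ)) / (1 + p.1.1 + p.1.1 * p.1.2)),
        (((1 + (p.1.1 : ℝ) * (p.1.2 - p.1.1)) * x + ((p.1.1 : ℝ) - p.1.2)) /
            ((((p.1.2 : ℝ) - p.1.1) * (1 + (p.1.1 : ℝ) * p.1.2)) * x +
              1 + (p.1.2 : ℝ) * ((p.1.1 : ℝ) - p.1.2)) : ℂ) *
          (x : ℂ) ^ (s - 1) := by
    intro p
    have hA : (1:ℝ) ≤ (p.1.1 : ℝ) := by exact_mod_cast p.2.1
    have hB : (1:ℝ) ≤ (p.1.2 : ℝ) := by exact_mod_cast p.2.2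
    have hd1 : (0:ℝ) < 1 + p.1.1 * p.1.2 := by nlinarith
    have hd2 : (0:ℝ) < 1 + p.1.1 + p.1.1 * p.1.2 := by nlinarith
    have hle : ((p.1.2 : ℝ) / (1 + p.1.1 * p.1.2)) ≤
        ((1 + (p.1.2 : ℝ)) / (1 + p.1.1 + p.1.1 * p.1.2)) := by
      rw [div_le_div_iff₀ hd1 hd2]
      nlinarith
    rw [intervalIntegral.integral_of_le hle, MeasureTheory.integral_Ioc_eq_integral_Ioo]
    refine MeasureTheory.setIntegral_congr_ae measurableSet_Ioo ?_
    filter_upwards [ae_irrational] with x hirr hmem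
    have hreal := (S12_eq p.2.1 p.2.2 hirr hmem).1
    rw [hfdef]
    simp only []
    congr 1
    rw [hreal]
    push_cast
    ring
  exact (funext hterm : (fun p => ∫ x in T p, f x) = _) ▸ hsum
end
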